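/- Let D be an equireplicate block design with n blocks of size k on n symbols, each symbol occurring in exactly k blocks, and suppose every pair of distinct blocks intersects in exactly λ = k(k−1)/(n−1) symbols (λ an integer). Then every pair of distinct symbols occurs together in exactly λ blocks. -/
import Mathlib


open Finset

/-- A symmetric equireplicate design with constant block intersections `λ`
has every pair of distinct symbols covered by exactly `λ` blocks. -/
theorem linked_implies_balanced (n k lam : ℕ) (hn : 1 < n)
    (B : Fin n → Finset (Fin n))
    (hsize : ∀ i, (B i).card = k)
    (hrep : ∀ s : Fin n, (Finset.univ.filter fun i => s ∈ B i).card = k)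
    (hlam : lam * (n - 1) = k * (k - 1))
    (hint : ∀ i j : Fin n, i ≠ j → (B i ∩ B j).card = lam) :
    ∀ p q : Fin n, p ≠ q →
      (Finset.univ.filter fun i => p ∈ B i ∧ q ∈ B i).card = lam := by
  intro p q hpq
  set P : Finset (Fin n) := Finset.univ.filter (fun i => p ∈ B i) with hPdef
  have hPcard : P.card = k := hrep p
  have hPmem : ∀ i, i ∈ P ↔ p ∈ B i := by
    intro i; simp [hPdef]
  set μ : Fin n → ℕ :=
    fun r => (Finset.univ.filter fun i => p ∈ B i ∧ r ∈ B i).card with hμdef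
  have hμalt : ∀ r, μ r = ∑ i ∈ P, (if r ∈ B i then 1 else 0) := by
    intro r
    have hset : (Finset.univ.filter fun i => p ∈ B i ∧ r ∈ B i)
        = P.filter (fun i => r ∈ B i) := by
      ext i; simp [hPdef]
    rw [hμdef]
    show (Finset.univ.filter fun i => p ∈ B i ∧ r ∈ B i).card = _
    rw [hset, Finset.card_filter]
  -- the set of symbols other than p
  set S : Finset (Fin n) := Finset.univ.erase p with hSdef
  have hScard : S.card = n - 1 := by
    rw [hSdef, Finset.card_erase_of_mem (Finset.mem_univ p)]
    simp
  have hqS : q ∈ S := by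
    rw [hSdef, Finset.mem_erase]
    exact ⟨hpq.symm, Finset.mem_univ q⟩
  -- inner filter identity
  have hfilt : ∀ i : Fin n, S.filter (fun r => r ∈ B i) = (B i).erase p := by
    intro i
    ext r
    simp only [hSdef, Finset.mem_filter, Finset.mem_erase, Finset.mem_univ,
      and_true, true_and]
  -- first moment
  have hsum1 : ∑ r ∈ S, μ r = k * (k - 1) := by
    calc ∑ r ∈ S, μ r = ∑ r ∈ S, ∑ i ∈ P, (if r ∈ B i then 1 else 0) :=
          Finset.sum_congr rfl fun r _ => hμalt r
      _ = ∑ i ∈ P, ∑ r ∈ S, (if r ∈ B i then 1 else 0) := Finset.sum_comm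
      _ = ∑ i ∈ P, (S.filter (fun r => r ∈ B i)).card := by
          refine Finset.sum_congr rfl fun i _ => ?_
          rw [Finset.card_filter]
      _ = ∑ i ∈ P, (k - 1) := by
          refine Finset.sum_congr rfl fun i hi => ?_
          rw [hfilt i, Finset.card_erase_of_mem ((hPmem i).1 hi), hsize i]
      _ = k * (k - 1) := by rw [Finset.sum_const, hPcard, smul_eq_mul]
  -- case lam = 0
  rcases Nat.eq_zero_or_pos lam with hlz | hlpos
  · subst hlz
    simp only [zero_mul] at hlam
    have h0 : ∑ r ∈ S, μ r = 0 := by rw [hsum1, ← hlam]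
    have := (Finset.sum_eq_zero_iff).1 h0 q hqS
    simpa [hμdef] using this
  -- second moment
  have hsum2 : ∑ r ∈ S, μ r * μ r = k * (k - 1) * lam := by
    have step : ∀ r, μ r * μ r =
        ∑ i ∈ P, ∑ j ∈ P, (if r ∈ B i ∧ r ∈ B j then 1 else 0) := by
      intro r
      rw [hμalt r, Finset.sum_mul_sum]
      refine Finset.sum_congr rfl fun i _ => Finset.sum_congr rfl fun j _ => ?_
      by_cases h1 : r ∈ B i <;> by_cases h2 : r ∈ B j <;> simp [h1, h2]
    calc ∑ r ∈ S, μ r * μ r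
        = ∑ r ∈ S, ∑ i ∈ P, ∑ j ∈ P, (if r ∈ B i ∧ r ∈ B j then 1 else 0) :=
          Finset.sum_congr rfl fun r _ => step r
      _ = ∑ i ∈ P, ∑ j ∈ P, ∑ r ∈ S, (if r ∈ B i ∧ r ∈ B j then 1 else 0) := by
          rw [Finset.sum_comm]
          exact Finset.sum_congr rfl fun i _ => Finset.sum_comm
      _ = ∑ i ∈ P, ∑ j ∈ P, ((B i ∩ B j).erase p).card := by
          refine Finset.sum_congr rfl fun i _ => Finset.sum_congr rfl fun j _ => ?_
          have hset : S.filter (fun r => r ∈ B i ∧ r ∈ B j)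
              = (B i ∩ B j).erase p := by
            ext r
            simp only [hSdef, Finset.mem_filter, Finset.mem_erase,
              Finset.mem_univ, Finset.mem_inter, and_true, true_and]
          rw [← hset, Finset.card_filter]
      _ = ∑ i ∈ P, ((k - 1) + (k - 1) * (lam - 1)) := by
          refine Finset.sum_congr rfl fun i hi => ?_
          have hpi : p ∈ B i := (hPmem i).1 hi
          rw [← Finset.add_sum_erase _ _ hi]
          congr 1
          · rw [Finset.inter_self, Finset.card_erase_of_mem hpi, hsize i]
          · have : ∀ j ∈ P.erase i, ((B i ∩ B j).erase p).card = lam - 1 := by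
              intro j hj
              have hji : j ≠ i := (Finset.mem_erase.1 hj).1
              have hpj : p ∈ B j := (hPmem j).1 (Finset.mem_of_mem_erase hj)
              rw [Finset.card_erase_of_mem (Finset.mem_inter.2 ⟨hpi, hpj⟩),
                hint i j hji.symm]
            rw [Finset.sum_congr rfl this, Finset.sum_const,
              Finset.card_erase_of_mem hi, hPcard, smul_eq_mul]
      _ = k * ((k - 1) + (k - 1) * (lam - 1)) := by
          rw [Finset.sum_const, hPcard, smul_eq_mul]
      _ = k * (k - 1) * lam := by
          obtain ⟨l, rfl⟩ : ∃ l, lam = l + 1 := ⟨lam - 1, by omega⟩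
          have h : l + 1 - 1 = l := rfl
          rw [h]
          ring
  -- variance argument over ℤ
  have e1 : (∑ r ∈ S, (μ r : ℤ)) = ((k * (k - 1) : ℕ) : ℤ) := by
    exact_mod_cast hsum1
  have e2 : (∑ r ∈ S, (μ r : ℤ) * (μ r : ℤ)) = ((k * (k - 1) : ℕ) : ℤ) * lam := by
    exact_mod_cast hsum2
  have e3 : (lam : ℤ) * ((n - 1 : ℕ) : ℤ) = ((k * (k - 1) : ℕ) : ℤ) := by
    exact_mod_cast hlam
  have e4 : ((S.card : ℕ) : ℤ) = ((n - 1 : ℕ) : ℤ) := by exact_mod_cast hScard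
  have hvar : ∑ r ∈ S, ((μ r : ℤ) - lam) ^ 2 = 0 := by
    have expand : ∀ r ∈ S, ((μ r : ℤ) - lam) ^ 2
        = (μ r : ℤ) * (μ r : ℤ) - 2 * lam * (μ r : ℤ) + (lam : ℤ) * lam :=
      fun r _ => by ring
    rw [Finset.sum_congr rfl expand, Finset.sum_add_distrib,
      Finset.sum_sub_distrib, e2, ← Finset.mul_sum, e1, Finset.sum_const,
      nsmul_eq_mul, e4, ← e3]
    ring
  have hzero := (Finset.sum_eq_zero_iff_of_nonneg
    (fun r _ => sq_nonneg ((μ r : ℤ) - lam))).1 hvar q hqS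
  have hfin : (μ q : ℤ) = lam := by
    have := sq_eq_zero_iff.1 hzero
    linarith
  exact_mod_cast hfin
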